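/- Let A be a commutative algebra, Ш⁺(A) = ⊕_{n≥0} A^{⊗n} the shuffle algebra with product ⋄, and Ш(A) = A ⊗ Ш⁺(A) the tensor product algebra. Define R on Ш(A) by R(a₀ ⊗ a) = 1 ⊗ (a₀ ⊗ a) for a ∈ A^{⊗n}, n ≥ 1, and R(a₀ ⊗ μ) = 1 ⊗ (μ a₀) for μ ∈ k. Then R is a Rota–Baxter operator of weight 0 on the commutative algebra Ш(A). -/

import Mathlib

/-- The shuffle of two words, as an element of the free module on words with
coefficients in a commutative ring `R`. -/
noncomputable def shuffleWord {R ι : Type*} [CommRing R] : List ι → List ι → (List ι →₀ R)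
  | [], b => Finsupp.single b 1
  | a, [] => Finsupp.single a 1
  | x :: xs, y :: ys =>
      (shuffleWord xs (y :: ys)).mapDomain (x :: ·) +
      (shuffleWord (x :: xs) ys).mapDomain (y :: ·)
  termination_by a b => a.length + b.length

/-- The product of the algebra `Ш(A) = A ⊗ Ш⁺(A)`, modelled as `List ι →₀ A`
for a basis `ι` of the commutative `k`-algebra `A`: here `a₀ ⊗ u` corresponds to
`Finsupp.single u a₀`, and `(a₀ ⊗ u) ⋅ (b₀ ⊗ v) = (a₀ b₀) ⊗ (u ⋄ v)` where `⋄`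
is the shuffle product. -/
noncomputable def shaMul {A ι : Type*} [CommRing A] (f g : List ι →₀ A) : List ι →₀ A :=
  f.sum fun u x => g.sum fun v y => (x * y) • shuffleWord u v

/-- The Rota–Baxter operator on `Ш(A)`: `R(a₀ ⊗ u) = 1 ⊗ (a₀ ⊗ u)`, i.e. the
element `a₀` of `A` is expanded over the basis `ι` and prepended to the word. -/
noncomputable def shaR {k A ι : Type*} [Field k] [CommRing A] [Algebra k A]
    (bas : Module.Basis ι k A) (f : List ι →₀ A) : List ι →₀ A :=
  f.sum fun u x => (bas.repr x).sum fun i c => Finsupp.single (i :: u) (algebraMap k A c)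

section
variable {k A ι : Type*} [Field k] [CommRing A] [Algebra k A]

lemma shuffleWord_nil_left (b : List ι) : (shuffleWord [] b : List ι →₀ A) = Finsupp.single b 1 := by
  rw [shuffleWord]

lemma shuffleWord_nil_right (a : List ι) : (shuffleWord a [] : List ι →₀ A) = Finsupp.single a 1 := by
  cases a <;> rw [shuffleWord] <;> simp

lemma shuffleWord_cons_cons (x y : ι) (xs ys : List ι) :
    (shuffleWord (x :: xs) (y :: ys) : List ι →₀ A) =
      (shuffleWord xs (y :: ys)).mapDomain (x :: ·) +
      (shuffleWord (x :: xs) ys).mapDomain (y :: ·) := by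
  rw [shuffleWord]

lemma shaMul_single_single (u v : List ι) (x y : A) :
    shaMul (Finsupp.single u x) (Finsupp.single v y) = (x * y) • shuffleWord u v := by
  unfold shaMul
  rw [Finsupp.sum_single_index, Finsupp.sum_single_index]
  · simp
  · simp

lemma shaMul_zero_left (g : List ι →₀ A) : shaMul 0 g = 0 := by simp [shaMul]

lemma shaMul_zero_right (f : List ι →₀ A) : shaMul f 0 = 0 := by simp [shaMul]

lemma shaMul_add_left (f f' g : List ι →₀ A) :
    shaMul (f + f') g = shaMul f g + shaMul f' g := by
  unfold shaMul
  rw [Finsupp.sum_add_index']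
  · intro a; simp
  · intro a b₁ b₂; rw [← Finsupp.sum_add]; simp [add_mul, add_smul]

lemma shaMul_add_right (f g g' : List ι →₀ A) :
    shaMul f (g + g') = shaMul f g + shaMul f g' := by
  unfold shaMul
  rw [← Finsupp.sum_add]
  congr 1; ext u x
  rw [Finsupp.sum_add_index']
  · intro a; simp
  · intro a b₁ b₂; simp [mul_add, add_smul]

lemma shaR_zero (bas : Module.Basis ι k A) : shaR bas 0 = 0 := by simp [shaR]

lemma shaR_add (bas : Module.Basis ι k A) (f g : List ι →₀ A) :
    shaR bas (f + g) = shaR bas f + shaR bas g := by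
  unfold shaR
  rw [Finsupp.sum_add_index']
  · intro a; simp
  · intro a b₁ b₂; rw [map_add, Finsupp.sum_add_index'] <;> simp

lemma shaR_single (bas : Module.Basis ι k A) (u : List ι) (x : A) :
    shaR bas (Finsupp.single u x) =
      (bas.repr x).sum fun i c => Finsupp.single (i :: u) (algebraMap k A c) := by
  unfold shaR
  rw [Finsupp.sum_single_index]
  simp

end
section
variable {k A ι : Type*} [Field k] [CommRing A] [Algebra k A]

lemma shuffleWord_cast (u v : List ι) :
    (shuffleWord u v : List ι →₀ A) =
      (shuffleWord u v : List ι →₀ ℤ).mapRange Int.cast Int.cast_zero := by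
  induction u, v using shuffleWord.induct with
  | case1 b => rw [shuffleWord_nil_left, shuffleWord_nil_left]; simp [Finsupp.mapRange_single]
  | case2 a h => rw [shuffleWord_nil_right, shuffleWord_nil_right]; simp [Finsupp.mapRange_single]
  | case3 x xs y ys ih1 ih2 =>
      rw [shuffleWord_cons_cons, shuffleWord_cons_cons, ih1, ih2,
        Finsupp.mapRange_add (by exact fun a b => Int.cast_add a b),
        Finsupp.mapDomain_mapRange _ _ _ _ (fun a b => Int.cast_add a b),
        Finsupp.mapDomain_mapRange _ _ _ _ (fun a b => Int.cast_add a b)]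

/-- `shaRw` on a single summand, as an AddMonoidHom in the coefficient. -/
lemma shaR_single_apply (bas : Module.Basis ι k A) (w : List ι) (z : A) (n : ℤ) :
    shaR bas (Finsupp.single w (z * (n : A))) =
      n • shaR bas (Finsupp.single w z) := by
  rw [shaR_single, shaR_single]
  have h1 : bas.repr (z * (n : A)) = n • bas.repr z := by
    rw [show z * (n : A) = n • z by simp [zsmul_eq_mul, mul_comm], map_zsmul]
  rw [h1]
  classical
  rw [Finsupp.sum_smul_index' (by intro i; simp), Finsupp.smul_sum]
  exact Finsupp.sum_congr fun i _ => by rw [map_zsmul, ← Finsupp.smul_single]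

lemma shaR_smul_shuffle (bas : Module.Basis ι k A) (p q : List ι) (z : A) :
    shaR bas (z • (shuffleWord p q : List ι →₀ A)) =
      (bas.repr z).sum fun j d =>
        (algebraMap k A d) • (shuffleWord p q : List ι →₀ A).mapDomain (j :: ·) := by
  rw [shuffleWord_cast (A := A)]
  generalize (shuffleWord p q : List ι →₀ ℤ) = g
  induction g using Finsupp.induction with
  | zero => simp [shaR_zero, Finsupp.mapRange_zero]
  | single_add w n f hw hn ih =>
      rw [Finsupp.mapRange_add (fun a b => Int.cast_add a b), smul_add, shaR_add,
        ih]
      rw [Finsupp.mapRange_single]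
      have h2 : z • (Finsupp.single w ((n : A)) : List ι →₀ A)
          = Finsupp.single w (z * (n : A)) := by
        rw [Finsupp.smul_single, smul_eq_mul]
      rw [h2, shaR_single_apply, shaR_single, Finsupp.smul_sum, ← Finsupp.sum_add]
      refine Finsupp.sum_congr fun j _ => ?_
      rw [Finsupp.mapDomain_add, smul_add, Finsupp.mapDomain_single,
        Finsupp.smul_single, Finsupp.smul_single]
      congr 2
      simp [zsmul_eq_mul, smul_eq_mul, mul_comm]
end
section
variable {k A ι : Type*} [Field k] [CommRing A] [Algebra k A]

noncomputable def shaMulL (g : List ι →₀ A) : (List ι →₀ A) →+ (List ι →₀ A) :=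
  AddMonoidHom.mk' (fun f => shaMul f g) fun f f' => shaMul_add_left f f' g

noncomputable def shaMulR (f : List ι →₀ A) : (List ι →₀ A) →+ (List ι →₀ A) :=
  AddMonoidHom.mk' (shaMul f) fun g g' => shaMul_add_right f g g'

noncomputable def shaRhom (bas : Module.Basis ι k A) : (List ι →₀ A) →+ (List ι →₀ A) :=
  AddMonoidHom.mk' (shaR bas) (shaR_add bas)

lemma shaMul_sum_left {σ M : Type*} [Zero M] (m : σ →₀ M)
    (h : σ → M → (List ι →₀ A)) (g : List ι →₀ A) :
    shaMul (m.sum h) g = m.sum fun i c => shaMul (h i c) g :=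
  map_finsuppSum (shaMulL g) m h

lemma shaMul_sum_right {σ M : Type*} [Zero M] (f : List ι →₀ A) (m : σ →₀ M)
    (h : σ → M → (List ι →₀ A)) :
    shaMul f (m.sum h) = m.sum fun i c => shaMul f (h i c) :=
  map_finsuppSum (shaMulR f) m h

lemma shaR_sum {σ M : Type*} [Zero M] (bas : Module.Basis ι k A) (m : σ →₀ M)
    (h : σ → M → (List ι →₀ A)) :
    shaR bas (m.sum h) = m.sum fun i c => shaR bas (h i c) :=
  map_finsuppSum (shaRhom bas) m h

lemma key_single (bas : Module.Basis ι k A) (u v : List ι) (a b : A) :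
    shaMul (shaR bas (Finsupp.single u a)) (shaR bas (Finsupp.single v b)) =
      shaR bas (shaMul (shaR bas (Finsupp.single u a)) (Finsupp.single v b) +
        shaMul (Finsupp.single u a) (shaR bas (Finsupp.single v b))) := by
  have e1 : ∀ c : k, bas.repr (algebraMap k A c * b) = c • bas.repr b := by
    intro c; rw [← Algebra.smul_def, map_smul]
  have e2 : ∀ d : k, bas.repr (a * algebraMap k A d) = d • bas.repr a := by
    intro d; rw [mul_comm, ← Algebra.smul_def, map_smul]
  have lhs_eq :
      shaMul (shaR bas (Finsupp.single u a)) (shaR bas (Finsupp.single v b)) =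
        (bas.repr a).sum fun i c => (bas.repr b).sum fun j d =>
          ((algebraMap k A c * algebraMap k A d) •
              (shuffleWord u (j :: v) : List ι →₀ A).mapDomain (i :: ·) +
            (algebraMap k A c * algebraMap k A d) •
              (shuffleWord (i :: u) v : List ι →₀ A).mapDomain (j :: ·)) := by
    rw [shaR_single, shaR_single, shaMul_sum_left]
    refine Finsupp.sum_congr fun i _ => ?_
    rw [shaMul_sum_right]
    refine Finsupp.sum_congr fun j _ => ?_
    rw [shaMul_single_single, shuffleWord_cons_cons, smul_add]
  have t1 :
      shaR bas (shaMul (shaR bas (Finsupp.single u a)) (Finsupp.single v b)) =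
        (bas.repr a).sum fun i c => (bas.repr b).sum fun j d =>
          (algebraMap k A c * algebraMap k A d) •
            (shuffleWord (i :: u) v : List ι →₀ A).mapDomain (j :: ·) := by
    rw [shaR_single, shaMul_sum_left, shaR_sum]
    refine Finsupp.sum_congr fun i _ => ?_
    rw [shaMul_single_single, shaR_smul_shuffle, e1,
      Finsupp.sum_smul_index' (by intro j; simp)]
    refine Finsupp.sum_congr fun j _ => ?_
    rw [smul_eq_mul, map_mul]
  have t2 :
      shaR bas (shaMul (Finsupp.single u a) (shaR bas (Finsupp.single v b))) =
        (bas.repr b).sum fun j d => (bas.repr a).sum fun i c =>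
          (algebraMap k A c * algebraMap k A d) •
            (shuffleWord u (j :: v) : List ι →₀ A).mapDomain (i :: ·) := by
    rw [shaR_single, shaMul_sum_right, shaR_sum]
    refine Finsupp.sum_congr fun j _ => ?_
    rw [shaMul_single_single, shaR_smul_shuffle, e2,
      Finsupp.sum_smul_index' (by intro i; simp)]
    refine Finsupp.sum_congr fun i _ => ?_
    rw [smul_eq_mul, map_mul, mul_comm]
  rw [shaR_add, t1, t2, Finsupp.sum_comm (bas.repr b) (bas.repr a), lhs_eq,
    ← Finsupp.sum_add]
  refine Finsupp.sum_congr fun i _ => ?_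
  rw [← Finsupp.sum_add]
  exact Finsupp.sum_congr fun j _ => by rw [add_comm]
end

lemma key_single_any {k A ι : Type*} [Field k] [CommRing A] [Algebra k A]
    (bas : Module.Basis ι k A) (u : List ι) (a : A) :
    ∀ y : List ι →₀ A,
      shaMul (shaR bas (Finsupp.single u a)) (shaR bas y) =
        shaR bas (shaMul (shaR bas (Finsupp.single u a)) y +
          shaMul (Finsupp.single u a) (shaR bas y)) := by
  intro y
  induction y using Finsupp.induction with
  | zero => simp [shaR_zero, shaMul_zero_left, shaMul_zero_right]
  | single_add v b g _ _ ihg =>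
      simp only [shaR_add, shaMul_add_right, ihg, key_single]
      abel

/-- The operator `R(a₀ ⊗ a) = 1 ⊗ a₀ ⊗ a` is a Rota–Baxter operator of weight 0
on the commutative algebra `Ш(A) = A ⊗ Ш⁺(A)`. -/
theorem shaR_is_RB_weight_zero {k A ι : Type*} [Field k] [CommRing A] [Algebra k A]
    (bas : Module.Basis ι k A) :
    ∀ x y : List ι →₀ A,
      shaMul (shaR bas x) (shaR bas y) =
        shaR bas (shaMul (shaR bas x) y + shaMul x (shaR bas y)) := by
  intro x y
  induction x using Finsupp.induction generalizing y with
  | zero => simp [shaR_zero, shaMul_zero_left]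
  | single_add u a f _ _ ihf =>
      simp only [shaR_add, shaMul_add_left, key_single_any bas u a y, ihf y]
      abel
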